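/- Fix ξ ∈ ℝ and c > 0. Define φ : ℝ → ℝ by φ(u) = (1+u)³(1−u)³ for |u| ≤ 1 and φ(u) = 0 for |u| > 1, and define φ̄ : ℝ → ℝ by φ̄(x) = φ((x−ξ)/c)·(x−ξ)·|x−ξ|. Then: (a) φ̄ is differentiable on ℝ, and φ̄(x) = φ̄′(x) = 0 for all x with |x−ξ| ≥ c; moreover φ̄ is twice differentiable at every x with |x−ξ| > c with second derivative 0 there; (b) φ̄(ξ) = φ̄′(ξ) = 0, the left derivative of φ̄′ at ξ equals −2, and the right derivative of φ̄′ at ξ equals 2; (c) φ̄′(x) ∈ [−6c, 6c] for all x ∈ ℝ; (d) φ̄ is Lipschitz, φ̄′ is Lipschitz on ℝ, and the second derivative φ̄″ — which exists at every x ≠ ξ — is Lipschitz on each of the intervals (−∞, ξ) and (ξ, ∞). -/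

import Mathlib

/-- The basic bump `φ(u) = (1+u)³(1-u)³` on `[-1,1]`, zero outside. -/
noncomputable def phi (u : ℝ) : ℝ := if |u| ≤ 1 then (1 + u) ^ 3 * (1 - u) ^ 3 else 0

/-- The localized bump `φ̄(x) = φ((x-ξ)/c)·(x-ξ)·|x-ξ|`. -/
noncomputable def phibar (ξ c x : ℝ) : ℝ := phi ((x - ξ) / c) * (x - ξ) * |x - ξ|

open Set Filter



/-- Glue two Lipschitz-on pieces meeting at a point. -/
lemma lipGlue {f : ℝ → ℝ} {K : NNReal} {s t : Set ℝ} {a : ℝ}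
    (hs : LipschitzOnWith K f s) (ht : LipschitzOnWith K f t)
    (has : a ∈ s) (hat : a ∈ t) (hsub : s ⊆ Set.Iic a) (htsub : t ⊆ Set.Ici a) :
    LipschitzOnWith K f (s ∪ t) := by
  rw [lipschitzOnWith_iff_dist_le_mul] at hs ht ⊢
  have key : ∀ x ∈ s, ∀ y ∈ t, dist (f x) (f y) ≤ K * dist x y := by
    intro x hx y hy
    have hxa : x ≤ a := hsub hx
    have hay : a ≤ y := htsub hy
    calc dist (f x) (f y) ≤ dist (f x) (f a) + dist (f a) (f y) := dist_triangle _ _ _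
      _ ≤ K * dist x a + K * dist a y := add_le_add (hs x hx a has) (ht a hat y hy)
      _ = K * (dist x a + dist a y) := by ring
      _ = K * dist x y := by
          rw [Real.dist_eq, Real.dist_eq, Real.dist_eq,
            abs_of_nonpos (by linarith : x - a ≤ 0), abs_of_nonpos (by linarith : a - y ≤ 0),
            abs_of_nonpos (by linarith : x - y ≤ 0)]
          ring
  intro x hx y hy
  rcases hx with hx | hx <;> rcases hy with hy | hy
  · exact hs x hx y hy
  · exact key x hx y hy
  · rw [dist_comm, dist_comm x y]; exact key y hy x hx
  · exact ht x hx y hy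

lemma lipCongr {f g : ℝ → ℝ} {K : NNReal} {s : Set ℝ}
    (hf : LipschitzOnWith K f s) (h : ∀ x ∈ s, g x = f x) : LipschitzOnWith K g s := by
  rw [lipschitzOnWith_iff_dist_le_mul] at hf ⊢
  intro x hx y hy
  rw [h x hx, h y hy]
  exact hf x hx y hy

lemma hasDerivAt_reluSq (s : ℝ) : HasDerivAt (fun y : ℝ => max y 0 ^ 2) (2 * max s 0) s := by
  rcases lt_trichotomy s 0 with h | h | h
  · have he : (fun y : ℝ => max y 0 ^ 2) =ᶠ[nhds s] fun _ => (0 : ℝ) := by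
      filter_upwards [Iio_mem_nhds h] with y hy
      simp [max_eq_right (le_of_lt (Set.mem_Iio.1 hy))]
    simpa [max_eq_right h.le] using (hasDerivAt_const s (0 : ℝ)).congr_of_eventuallyEq he
  · subst h
    rw [hasDerivAt_iff_isLittleO, Asymptotics.isLittleO_iff]
    intro ε hε
    filter_upwards [Metric.ball_mem_nhds (0 : ℝ) hε] with y hy
    rw [Metric.mem_ball, Real.dist_eq, sub_zero] at hy
    have h1 : max y 0 ≤ |y| := max_le (le_abs_self y) (abs_nonneg y)
    have h2 : (0 : ℝ) ≤ max y 0 := le_max_right _ _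
    have hms : max (0:ℝ) 0 = 0 := max_self 0
    rw [hms]
    norm_num [Real.norm_eq_abs]
    nlinarith [abs_nonneg y, mul_le_mul h1 h1 h2 (abs_nonneg y)]
  · have he : (fun y : ℝ => max y 0 ^ 2) =ᶠ[nhds s] fun y => y ^ 2 := by
      filter_upwards [Ioi_mem_nhds h] with y hy
      simp [max_eq_left (le_of_lt (Set.mem_Ioi.1 hy))]
    have h2 : HasDerivAt (fun y : ℝ => y ^ 2) (2 * s) s := by simpa using hasDerivAt_pow 2 s
    simpa [max_eq_left h.le] using h2.congr_of_eventuallyEq he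

lemma hasDerivAt_reluCube (s : ℝ) : HasDerivAt (fun y : ℝ => max y 0 ^ 3) (3 * max s 0 ^ 2) s := by
  rcases lt_trichotomy s 0 with h | h | h
  · have he : (fun y : ℝ => max y 0 ^ 3) =ᶠ[nhds s] fun _ => (0 : ℝ) := by
      filter_upwards [Iio_mem_nhds h] with y hy
      simp [max_eq_right (le_of_lt (Set.mem_Iio.1 hy))]
    simpa [max_eq_right h.le] using (hasDerivAt_const s (0 : ℝ)).congr_of_eventuallyEq he
  · subst h
    rw [hasDerivAt_iff_isLittleO, Asymptotics.isLittleO_iff]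
    intro ε hε
    filter_upwards [Metric.ball_mem_nhds (0 : ℝ) (lt_min one_pos hε : (0:ℝ) < min 1 ε)] with y hy
    rw [Metric.mem_ball, Real.dist_eq, sub_zero, lt_min_iff] at hy
    have h1 : max y 0 ≤ |y| := max_le (le_abs_self y) (abs_nonneg y)
    have h2 : (0 : ℝ) ≤ max y 0 := le_max_right _ _
    have h3 : max y 0 ^ 3 ≤ |y| ^ 3 := pow_le_pow_left₀ h2 h1 3
    have hms : max (0:ℝ) 0 = 0 := max_self 0
    rw [hms]
    norm_num [Real.norm_eq_abs]
    rw [abs_of_nonneg h2]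
    have h4 : |y| * |y| ≤ 1 * ε := mul_le_mul hy.1.le hy.2.le (abs_nonneg y) zero_le_one
    nlinarith [abs_nonneg y, h3, h4]
  · have he : (fun y : ℝ => max y 0 ^ 3) =ᶠ[nhds s] fun y => y ^ 3 := by
      filter_upwards [Ioi_mem_nhds h] with y hy
      simp [max_eq_left (le_of_lt (Set.mem_Ioi.1 hy))]
    have h2 : HasDerivAt (fun y : ℝ => y ^ 3) (3 * s ^ 2) s := by simpa using hasDerivAt_pow 3 s
    simpa [max_eq_left h.le] using h2.congr_of_eventuallyEq he




noncomputable def mf (ξ c x : ℝ) : ℝ := max (1 - ((x - ξ)/c)^2) 0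

noncomputable def Dfun (ξ c x : ℝ) : ℝ :=
  3 * mf ξ c x ^ 2 * (-(2*(x-ξ)/c^2)) * ((x-ξ)*|x-ξ|) + mf ξ c x ^ 3 * (2*|x-ξ|)

noncomputable def Dp (ξ c x : ℝ) : ℝ :=
  -(6/c^2) * (mf ξ c x ^2 * (x-ξ)^3) + 2 * (mf ξ c x ^3 * (x-ξ))

noncomputable def Ep (ξ c x : ℝ) : ℝ :=
  24/c^4 * (mf ξ c x * (x-ξ)^4) - 30/c^2 * (mf ξ c x ^2 * (x-ξ)^2) + 2 * mf ξ c x ^3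

noncomputable def Pp (ξ c x : ℝ) : ℝ :=
  24/c^4 * ((1 - ((x-ξ)/c)^2) * (x-ξ)^4) - 30/c^2 * ((1 - ((x-ξ)/c)^2)^2 * (x-ξ)^2)
    + 2 * (1 - ((x-ξ)/c)^2)^3

noncomputable def Fp (ξ c x : ℝ) : ℝ :=
  1/c * (-48*((x-ξ)/c)^5 + 216*((1-((x-ξ)/c)^2)*((x-ξ)/c)^3) - 72*((1-((x-ξ)/c)^2)^2*((x-ξ)/c)))

section

variable (ξ c : ℝ)

lemma hg (x : ℝ) : HasDerivAt (fun x => 1 - ((x - ξ)/c)^2) (-(2*(x-ξ)/c^2)) x := by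
  have h1 : HasDerivAt (fun x : ℝ => (x - ξ)/c) (1/c) x :=
    ((hasDerivAt_id x).sub_const ξ).div_const c
  have h2 := h1.pow 2
  have h3 := h2.const_sub 1
  refine h3.congr_deriv ?_
  ring

lemma hmf2 (x : ℝ) :
    HasDerivAt (fun x => mf ξ c x ^ 2) (2 * mf ξ c x * (-(2*(x-ξ)/c^2))) x := by
  have := (hasDerivAt_reluSq (1 - ((x - ξ)/c)^2)).comp x (hg ξ c x)
  simpa [Function.comp_def, mf] using this

lemma hmf3 (x : ℝ) :
    HasDerivAt (fun x => mf ξ c x ^ 3) (3 * mf ξ c x ^ 2 * (-(2*(x-ξ)/c^2))) x := by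
  have := (hasDerivAt_reluCube (1 - ((x - ξ)/c)^2)).comp x (hg ξ c x)
  simpa [Function.comp_def, mf] using this

lemma habs (x : ℝ) : HasDerivAt (fun x : ℝ => (x-ξ)*|x-ξ|) (2*|x-ξ|) x := by
  have key : ∀ y : ℝ, (y-ξ)*|y-ξ| = max (y-ξ) 0^2 - max (ξ-y) 0^2 := by
    intro y
    rcases le_total ξ y with h | h
    · rw [abs_of_nonneg (by linarith), max_eq_left (by linarith), max_eq_right (by linarith)]
      ring
    · rw [abs_of_nonpos (by linarith), max_eq_right (by linarith), max_eq_left (by linarith)]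
      ring
  have h1 := (hasDerivAt_reluSq (x - ξ)).comp x ((hasDerivAt_id x).sub_const ξ)
  have h2 := (hasDerivAt_reluSq (ξ - x)).comp x ((hasDerivAt_id x).const_sub ξ)
  have h3 := h1.sub h2
  have h4 : HasDerivAt (fun y : ℝ => max (y-ξ) 0^2 - max (ξ-y) 0^2)
      (2 * max (x-ξ) 0 * 1 - 2 * max (ξ-x) 0 * (-1)) x := by
    simpa [Function.comp_def, Pi.sub_def] using h3
  have h5 : (2 : ℝ) * max (x-ξ) 0 * 1 - 2 * max (ξ-x) 0 * (-1) = 2*|x-ξ| := by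
    rcases le_total ξ x with h | h
    · rw [abs_of_nonneg (by linarith), max_eq_left (by linarith), max_eq_right (by linarith)]
      ring
    · rw [abs_of_nonpos (by linarith), max_eq_right (by linarith), max_eq_left (by linarith)]
      ring
  rw [← h5]
  exact h4.congr_of_eventuallyEq (Eventually.of_forall fun y => key y)

lemma phibar_eq (x : ℝ) : phibar ξ c x = mf ξ c x ^ 3 * ((x-ξ)*|x-ξ|) := by
  unfold phibar phi mf
  split_ifs with h
  · have hu : ((x-ξ)/c)^2 ≤ 1 := by
      rw [← sq_abs]
      nlinarith [abs_nonneg ((x-ξ)/c)]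
    rw [max_eq_left (by linarith)]
    ring
  · push_neg at h
    have hu : 1 < ((x-ξ)/c)^2 := by
      rw [← sq_abs]
      nlinarith [abs_nonneg ((x-ξ)/c)]
    rw [max_eq_right (by linarith)]
    ring

lemma hD (x : ℝ) : HasDerivAt (phibar ξ c) (Dfun ξ c x) x := by
  have h := (hmf3 ξ c x).mul (habs ξ x)
  exact h.congr_of_eventuallyEq (Eventually.of_forall fun y => phibar_eq ξ c y)

lemma hderiv : deriv (phibar ξ c) = Dfun ξ c := funext fun x => (hD ξ c x).deriv

lemma mf_zero {x : ℝ} (hc : 0 < c) (h : c ≤ |x - ξ|) : mf ξ c x = 0 := by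
  have h2 : c^2 ≤ (x-ξ)^2 := by nlinarith [abs_nonneg (x - ξ), sq_abs (x-ξ)]
  have h3 : (1:ℝ) ≤ ((x-ξ)/c)^2 := by
    rw [div_pow, le_div_iff₀ (by positivity)]
    linarith
  exact max_eq_right (by linarith)

lemma mf_eq {x : ℝ} (hc : 0 < c) (h : |x - ξ| ≤ c) : mf ξ c x = 1 - ((x-ξ)/c)^2 := by
  have h2 : (x-ξ)^2 ≤ c^2 := by nlinarith [abs_nonneg (x - ξ), sq_abs (x-ξ)]
  have h3 : ((x-ξ)/c)^2 ≤ 1 := by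
    rw [div_pow, div_le_one (by positivity)]
    linarith
  exact max_eq_left (by linarith)

lemma hDp (hc : 0 < c) (x : ℝ) : HasDerivAt (Dp ξ c) (Ep ξ c x) x := by
  have hid : HasDerivAt (fun x : ℝ => x - ξ) 1 x := (hasDerivAt_id x).sub_const ξ
  have h1 := ((hmf2 ξ c x).mul (hid.pow 3)).const_mul (-(6/c^2))
  have h2 := ((hmf3 ξ c x).mul hid).const_mul (2:ℝ)
  have h3 := h1.add h2
  refine h3.congr_deriv ?_
  simp only [Pi.pow_apply]
  unfold Ep
  have : c ≠ 0 := hc.ne'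
  field_simp
  ring

lemma Dfun_eq_Dp {x : ℝ} (h : ξ ≤ x) : Dfun ξ c x = Dp ξ c x := by
  unfold Dfun Dp
  rw [abs_of_nonneg (by linarith)]
  ring

lemma Dfun_eq_negDp {x : ℝ} (h : x ≤ ξ) : Dfun ξ c x = -(Dp ξ c x) := by
  unfold Dfun Dp
  rw [abs_of_nonpos (by linarith)]
  ring

end
section
variable (ξ c : ℝ)

lemma r01 {x : ℝ} (hc : 0 < c) (h : |x - ξ| ≤ c) :
    0 ≤ (x-ξ)^2/c^2 ∧ (x-ξ)^2/c^2 ≤ 1 := by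
  refine ⟨by positivity, ?_⟩
  rw [div_le_one (by positivity)]
  nlinarith [abs_nonneg (x - ξ), sq_abs (x-ξ)]

lemma mf_eq' {x : ℝ} (hc : 0 < c) (h : |x - ξ| ≤ c) : mf ξ c x = 1 - (x-ξ)^2/c^2 := by
  rw [mf_eq ξ c hc h, div_pow]

lemma Dfun_bound {x : ℝ} (hc : 0 < c) : |Dfun ξ c x| ≤ 6 * c := by
  rcases le_or_gt c |x - ξ| with h | h
  · have h0 := mf_zero ξ c hc h
    unfold Dfun
    rw [h0]
    norm_num
    positivity
  · have hk : Dfun ξ c x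
        = 2*|x-ξ| * ((1-(x-ξ)^2/c^2)^2)*(1-4*((x-ξ)^2/c^2)) := by
      unfold Dfun
      rw [mf_eq' ξ c hc h.le]
      have hcne : c ≠ 0 := hc.ne'
      rcases le_total ξ x with hs | hs
      · rw [abs_of_nonneg (by linarith)]
        field_simp
        ring
      · rw [abs_of_nonpos (by linarith)]
        field_simp
        ring
    obtain ⟨hr0, hr1⟩ := r01 ξ c hc h.le
    set r : ℝ := (x-ξ)^2/c^2 with hrdef
    have ha0 : (0:ℝ) ≤ |x-ξ| := abs_nonneg _
    have key2 : |Dfun ξ c x| = 2*|x-ξ| * |(1-r)^2| * |1-4*r| := by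
      rw [hk, abs_mul, abs_mul, abs_of_nonneg (by positivity : (0:ℝ) ≤ 2*|x-ξ|)]
    have h1 : 2*|x-ξ| ≤ 2*c := by linarith
    have h2 : |(1-r)^2| ≤ 1 := by
      rw [abs_of_nonneg (sq_nonneg _)]
      nlinarith
    have h3 : |1-4*r| ≤ 3 := by
      rw [abs_le]; constructor <;> linarith
    calc |Dfun ξ c x| = 2*|x-ξ| * |(1-r)^2| * |1-4*r| := key2
      _ ≤ (2*c)*1*3 := by
          apply mul_le_mul _ h3 (abs_nonneg _) (by positivity)
          apply mul_le_mul h1 h2 (abs_nonneg _) (by positivity)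
      _ = 6*c := by ring

lemma Ep_zero {x : ℝ} (hc : 0 < c) (h : c ≤ |x - ξ|) : Ep ξ c x = 0 := by
  unfold Ep
  rw [mf_zero ξ c hc h]
  ring

lemma Ep_poly {x : ℝ} (hc : 0 < c) (h : |x - ξ| ≤ c) :
    Ep ξ c x = 24*((1-(x-ξ)^2/c^2)*((x-ξ)^2/c^2)^2) - 30*((1-(x-ξ)^2/c^2)^2*((x-ξ)^2/c^2))
      + 2*(1-(x-ξ)^2/c^2)^3 := by
  have hcne : c ≠ 0 := hc.ne'
  unfold Ep
  rw [mf_eq' ξ c hc h]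
  field_simp

lemma Ep_bound {x : ℝ} (hc : 0 < c) : |Ep ξ c x| ≤ 56 := by
  rcases le_or_gt c |x - ξ| with h | h
  · rw [Ep_zero ξ c hc h]
    norm_num
  · obtain ⟨hr0, hr1⟩ := r01 ξ c hc h.le
    rw [Ep_poly ξ c hc h.le, abs_le]
    set r : ℝ := (x-ξ)^2/c^2
    constructor <;> nlinarith
end
lemma nnnorm_le_mk {y b : ℝ} (h : |y| ≤ b) (hb : 0 ≤ b) : ‖y‖₊ ≤ ⟨b, hb⟩ := by
  exact NNReal.coe_le_coe.1 (by rw [coe_nnnorm, Real.norm_eq_abs]; exact h)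

lemma lipNeg {f : ℝ → ℝ} {K : NNReal} {s : Set ℝ} (hf : LipschitzOnWith K f s) :
    LipschitzOnWith K (fun x => -(f x)) s := by
  rw [lipschitzOnWith_iff_dist_le_mul] at hf ⊢
  intro x hx y hy
  rw [dist_neg_neg]
  exact hf x hx y hy

section
variable (ξ c : ℝ)

lemma hPp (hc : 0 < c) (x : ℝ) : HasDerivAt (Pp ξ c) (Fp ξ c x) x := by
  have hid : HasDerivAt (fun x : ℝ => x - ξ) 1 x := (hasDerivAt_id x).sub_const ξ
  have hgx := hg ξ c x
  have h1 := (hgx.mul (hid.pow 4)).const_mul (24/c^4)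
  have h2 := ((hgx.pow 2).mul (hid.pow 2)).const_mul (30/c^2)
  have h3 := (hgx.pow 3).const_mul (2:ℝ)
  have h4 := (h1.sub h2).add h3
  refine h4.congr_deriv ?_
  simp only [Pi.pow_apply]
  unfold Fp
  have hcne : c ≠ 0 := hc.ne'
  norm_num
  field_simp
  ring

lemma Ep_eq_Pp {x : ℝ} (hc : 0 < c) (h : |x - ξ| ≤ c) : Ep ξ c x = Pp ξ c x := by
  unfold Ep Pp
  rw [mf_eq ξ c hc h]

lemma Fp_bound {x : ℝ} (hc : 0 < c) (h : |x - ξ| ≤ c) : |Fp ξ c x| ≤ 336/c := by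
  have hcne : c ≠ 0 := hc.ne'
  set w : ℝ := (x-ξ)/c with hw
  have hw1 : |w| ≤ 1 := by
    rw [hw, abs_div, abs_of_pos hc, div_le_one hc]
    exact h
  have hw2 : w^2 ≤ 1 := by nlinarith [sq_abs w, abs_nonneg w]
  have hA : |w^5| ≤ 1 := by
    rw [abs_pow]; exact pow_le_one₀ (abs_nonneg w) hw1
  have ht : |1-w^2| ≤ 1 := by
    rw [abs_of_nonneg (by linarith)]
    nlinarith [sq_nonneg w]
  have hB : |(1-w^2)*w^3| ≤ 1 := by
    rw [abs_mul]
    exact mul_le_one₀ ht (abs_nonneg _) (by rw [abs_pow]; exact pow_le_one₀ (abs_nonneg w) hw1)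
  have hC : |(1-w^2)^2*w| ≤ 1 := by
    rw [abs_mul, abs_pow]
    exact mul_le_one₀ (pow_le_one₀ (abs_nonneg _) ht) (abs_nonneg _) hw1
  obtain ⟨a1, a1'⟩ := abs_le.1 hA
  obtain ⟨a2, a2'⟩ := abs_le.1 hB
  obtain ⟨a3, a3'⟩ := abs_le.1 hC
  have hP : |(-48*w^5 + 216*((1-w^2)*w^3) - 72*((1-w^2)^2*w))| ≤ 336 := by
    rw [abs_le]; constructor <;> linarith
  unfold Fp
  rw [← hw, abs_mul, abs_of_pos (by positivity : (0:ℝ) < 1/c)]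
  calc 1/c * |(-48*w^5 + 216*((1-w^2)*w^3) - 72*((1-w^2)^2*w))| ≤ 1/c * 336 :=
        mul_le_mul_of_nonneg_left hP (by positivity)
    _ = 336/c := by ring

lemma hDfun_pos (hc : 0 < c) {x : ℝ} (h : ξ < x) : HasDerivAt (Dfun ξ c) (Ep ξ c x) x := by
  refine (hDp ξ c hc x).congr_of_eventuallyEq ?_
  filter_upwards [Ioi_mem_nhds h] with y hy
  exact Dfun_eq_Dp ξ c (le_of_lt hy)

lemma hDfun_neg (hc : 0 < c) {x : ℝ} (h : x < ξ) :
    HasDerivAt (Dfun ξ c) (-(Ep ξ c x)) x := by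
  refine ((hDp ξ c hc x).neg).congr_of_eventuallyEq ?_
  filter_upwards [Iio_mem_nhds h] with y hy
  exact Dfun_eq_negDp ξ c (le_of_lt hy)

lemma EpLipIci (hc : 0 < c) :
    LipschitzOnWith ⟨336/c, by positivity⟩ (Ep ξ c) (Ici ξ) := by
  have lip1 : LipschitzOnWith ⟨336/c, by positivity⟩ (Ep ξ c) (Icc ξ (ξ+c)) := by
    apply (convex_Icc ξ (ξ+c)).lipschitzOnWith_of_nnnorm_hasDerivWithin_le (f' := Fp ξ c)
    · intro x hx
      have habs : ∀ y ∈ Icc ξ (ξ+c), |y - ξ| ≤ c := fun y hy =>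
        abs_le.2 ⟨by linarith [hy.1], by linarith [hy.2]⟩
      exact (hPp ξ c hc x).hasDerivWithinAt.congr
        (fun y hy => Ep_eq_Pp ξ c hc (habs y hy)) (Ep_eq_Pp ξ c hc (habs x hx))
    · intro x hx
      exact nnnorm_le_mk (Fp_bound ξ c hc (abs_le.2 ⟨by linarith [hx.1], by linarith [hx.2]⟩)) _
  have lip2 : LipschitzOnWith ⟨336/c, by positivity⟩ (Ep ξ c) (Ici (ξ+c)) := by
    apply lipschitzOnWith_iff_dist_le_mul.2
    intro x hx y hy
    rw [Ep_zero ξ c hc (le_trans (by linarith [mem_Ici.1 hx]) (le_abs_self _)),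
      Ep_zero ξ c hc (le_trans (by linarith [mem_Ici.1 hy]) (le_abs_self _)), dist_self]
    exact mul_nonneg (NNReal.coe_nonneg _) dist_nonneg
  have := lipGlue lip1 lip2 ⟨by linarith, le_rfl⟩ (mem_Ici.2 le_rfl)
    (fun y hy => hy.2) (fun y hy => hy)
  rwa [Icc_union_Ici_eq_Ici (by linarith : ξ ≤ ξ + c)] at this

lemma EpLipIic (hc : 0 < c) :
    LipschitzOnWith ⟨336/c, by positivity⟩ (Ep ξ c) (Iic ξ) := by
  have lip1 : LipschitzOnWith ⟨336/c, by positivity⟩ (Ep ξ c) (Icc (ξ-c) ξ) := by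
    apply (convex_Icc (ξ-c) ξ).lipschitzOnWith_of_nnnorm_hasDerivWithin_le (f' := Fp ξ c)
    · intro x hx
      have habs : ∀ y ∈ Icc (ξ-c) ξ, |y - ξ| ≤ c := fun y hy =>
        abs_le.2 ⟨by linarith [hy.1], by linarith [hy.2]⟩
      exact (hPp ξ c hc x).hasDerivWithinAt.congr
        (fun y hy => Ep_eq_Pp ξ c hc (habs y hy)) (Ep_eq_Pp ξ c hc (habs x hx))
    · intro x hx
      exact nnnorm_le_mk (Fp_bound ξ c hc (abs_le.2 ⟨by linarith [hx.1], by linarith [hx.2]⟩)) _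
  have lip2 : LipschitzOnWith ⟨336/c, by positivity⟩ (Ep ξ c) (Iic (ξ-c)) := by
    apply lipschitzOnWith_iff_dist_le_mul.2
    intro x hx y hy
    have h1 : c ≤ |x - ξ| := le_trans (by linarith [mem_Iic.1 hx]) (neg_le_abs _)
    have h2 : c ≤ |y - ξ| := le_trans (by linarith [mem_Iic.1 hy]) (neg_le_abs _)
    rw [Ep_zero ξ c hc h1, Ep_zero ξ c hc h2, dist_self]
    exact mul_nonneg (NNReal.coe_nonneg _) dist_nonneg
  have := lipGlue lip2 lip1 (mem_Iic.2 le_rfl) ⟨le_rfl, by linarith⟩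
    (fun y hy => hy) (fun y hy => hy.1)
  rwa [Iic_union_Icc_eq_Iic (by linarith : ξ - c ≤ ξ)] at this

end

/-- properties of the bump `φ̄`:
(a) `φ̄` is differentiable, vanishes together with `φ̄′` when `|x-ξ| ≥ c`, and is twice
differentiable with vanishing second derivative when `|x-ξ| > c`;
(b) `φ̄(ξ) = φ̄′(ξ) = 0`, and the one-sided derivatives of `φ̄′` at `ξ` are `-2` (left)
and `2` (right);
(c) `φ̄′(x) ∈ [-6c, 6c]` for all `x`;
(d) `φ̄` and `φ̄′` are Lipschitz, `φ̄′` is differentiable at every `x ≠ ξ`, and the second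
derivative `φ̄″` is Lipschitz on each of `(-∞, ξ)` and `(ξ, ∞)`. -/
theorem stmt_6 (ξ c : ℝ) (hc : 0 < c) :
    (Differentiable ℝ (phibar ξ c) ∧
      (∀ x : ℝ, c ≤ |x - ξ| → phibar ξ c x = 0 ∧ deriv (phibar ξ c) x = 0) ∧
      (∀ x : ℝ, c < |x - ξ| → HasDerivAt (deriv (phibar ξ c)) 0 x)) ∧
    (phibar ξ c ξ = 0 ∧ deriv (phibar ξ c) ξ = 0 ∧
      HasDerivWithinAt (deriv (phibar ξ c)) (-2) (Set.Iio ξ) ξ ∧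
      HasDerivWithinAt (deriv (phibar ξ c)) 2 (Set.Ioi ξ) ξ) ∧
    (∀ x : ℝ, deriv (phibar ξ c) x ∈ Set.Icc (-(6 * c)) (6 * c)) ∧
    ((∃ K : NNReal, LipschitzWith K (phibar ξ c)) ∧
      (∃ K : NNReal, LipschitzWith K (deriv (phibar ξ c))) ∧
      (∀ x : ℝ, x ≠ ξ → DifferentiableAt ℝ (deriv (phibar ξ c)) x) ∧
      (∃ K : NNReal, LipschitzOnWith K (deriv (deriv (phibar ξ c))) (Set.Iio ξ) ∧
        LipschitzOnWith K (deriv (deriv (phibar ξ c))) (Set.Ioi ξ))) := by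
  have hder := hderiv ξ c
  have hEpξ : Ep ξ c ξ = 2 := by unfold Ep mf; norm_num
  refine ⟨⟨fun x => (hD ξ c x).differentiableAt, ?_, ?_⟩, ⟨?_, ?_, ?_, ?_⟩, ?_, ?_, ?_, ?_, ?_⟩
  · -- vanishing for c ≤ |x-ξ|
    intro x h
    constructor
    · rw [phibar_eq, mf_zero ξ c hc h]; ring
    · rw [hder]; unfold Dfun; rw [mf_zero ξ c hc h]; ring
  · -- second derivative zero for c < |x-ξ|
    intro x h
    rw [hder]
    have hopen : IsOpen {y : ℝ | c < |y - ξ|} := isOpen_lt continuous_const (by fun_prop)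
    have hev : Dfun ξ c =ᶠ[nhds x] fun _ => (0:ℝ) := by
      filter_upwards [hopen.mem_nhds h] with y hy
      show Dfun ξ c y = 0
      unfold Dfun; rw [mf_zero ξ c hc (le_of_lt hy)]; ring
    exact (hasDerivAt_const x (0:ℝ)).congr_of_eventuallyEq hev
  · simp [phibar]
  · rw [hder]; unfold Dfun; simp
  · -- left one-sided derivative -2
    rw [hder]
    have h1 : HasDerivWithinAt (fun y => -(Dp ξ c y)) (-(2:ℝ)) (Iio ξ) ξ := by
      have := ((hDp ξ c hc ξ).neg).hasDerivWithinAt (s := Iio ξ)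
      rwa [hEpξ] at this
    exact h1.congr (fun y hy => Dfun_eq_negDp ξ c (le_of_lt hy)) (Dfun_eq_negDp ξ c le_rfl)
  · -- right one-sided derivative 2
    rw [hder]
    have h1 : HasDerivWithinAt (Dp ξ c) (2:ℝ) (Ioi ξ) ξ := by
      have := (hDp ξ c hc ξ).hasDerivWithinAt (s := Ioi ξ)
      rwa [hEpξ] at this
    exact h1.congr (fun y hy => Dfun_eq_Dp ξ c (le_of_lt hy)) (Dfun_eq_Dp ξ c le_rfl)
  · -- bound
    intro x
    rw [hder, Set.mem_Icc]
    have := abs_le.1 (Dfun_bound ξ c (x := x) hc)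
    exact ⟨this.1, this.2⟩
  · -- phibar Lipschitz
    refine ⟨⟨6*c, by positivity⟩, lipschitzWith_of_nnnorm_deriv_le
      (fun x => (hD ξ c x).differentiableAt) (fun x => ?_)⟩
    rw [hder]
    exact nnnorm_le_mk (Dfun_bound ξ c hc) _
  · -- deriv phibar Lipschitz
    rw [hder]
    have lipIci : LipschitzOnWith ⟨56, by norm_num⟩ (Dfun ξ c) (Ici ξ) := by
      apply (convex_Ici ξ).lipschitzOnWith_of_nnnorm_hasDerivWithin_le (f' := Ep ξ c)
      · intro x hx
        exact ((hDp ξ c hc x).hasDerivWithinAt).congr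
          (fun y hy => Dfun_eq_Dp ξ c hy) (Dfun_eq_Dp ξ c hx)
      · intro x _
        exact nnnorm_le_mk (Ep_bound ξ c hc) _
    have lipIic : LipschitzOnWith ⟨56, by norm_num⟩ (Dfun ξ c) (Iic ξ) := by
      apply (convex_Iic ξ).lipschitzOnWith_of_nnnorm_hasDerivWithin_le
        (f' := fun x => -(Ep ξ c x))
      · intro x hx
        exact (((hDp ξ c hc x).neg).hasDerivWithinAt).congr
          (fun y hy => Dfun_eq_negDp ξ c hy) (Dfun_eq_negDp ξ c hx)
      · intro x _
        exact nnnorm_le_mk (by rw [abs_neg]; exact Ep_bound ξ c hc) _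
    have := lipGlue lipIic lipIci (mem_Iic.2 le_rfl) (mem_Ici.2 le_rfl)
      (fun y hy => hy) (fun y hy => hy)
    rw [Iic_union_Ici] at this
    exact ⟨_, lipschitzOnWith_univ.1 this⟩
  · -- deriv phibar differentiable away from ξ
    intro x hx
    rw [hder]
    rcases lt_or_gt_of_ne hx with h | h
    · exact (hDfun_neg ξ c hc h).differentiableAt
    · exact (hDfun_pos ξ c hc h).differentiableAt
  · -- second derivative Lipschitz on each side
    refine ⟨⟨336/c, by positivity⟩, ?_, ?_⟩
    · rw [hder]
      refine lipCongr ((lipNeg (EpLipIic ξ c hc)).mono Iio_subset_Iic_self) ?_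
      intro y hy
      exact (hDfun_neg ξ c hc hy).deriv
    · rw [hder]
      refine lipCongr ((EpLipIci ξ c hc).mono Ioi_subset_Ici_self) ?_
      intro y hy
      exact (hDfun_pos ξ c hc hy).deriv
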